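/- Let μ be a probability measure on the positive reals with finite second moment and positive mean, and let v > 0. Then the excess kurtosis of the one-dimensional Gaussian scale mixture GSM(μ, v) is nonnegative, i.e. Gaussian scale mixtures are never platykurtic; it is zero if and only if the mixing distribution μ is a Dirac point mass (equivalently, Var_μ(z) = 0). -/

import Mathlib

open MeasureTheory ProbabilityTheory

section AuxGaussian

open Real Set
open scoped ENNReal NNReal

namespace GSMAux

lemma pdf_std (x : ℝ) : ((gaussianPDFReal 0 1 x).toNNReal : ℝ) = (√(2*π))⁻¹ * rexp (-x^2/2) := by
  rw [Real.coe_toNNReal _ (gaussianPDFReal_nonneg 0 1 x)]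
  simp [gaussianPDFReal]

lemma integral_std_even {f : ℝ → ℝ} (hf : ∀ x, f (-x) = f x) :
    ∫ x, f x ∂(gaussianReal 0 1) = (√(2*π))⁻¹ * (2 * ∫ x in Set.Ioi 0, f x * rexp (-x^2/2)) := by
  rw [gaussianReal_of_var_ne_zero 0 one_ne_zero]
  have h1 : gaussianPDF 0 1 = fun x => ((gaussianPDFReal 0 1 x).toNNReal : ℝ≥0∞) := rfl
  rw [h1, integral_withDensity_eq_integral_smul (measurable_gaussianPDFReal 0 1).real_toNNReal]
  have h2 : ∀ x, (gaussianPDFReal 0 1 x).toNNReal • f x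
      = (√(2*π))⁻¹ * (f x * rexp (-x^2/2)) := by
    intro x
    rw [NNReal.smul_def, smul_eq_mul, pdf_std]
    ring
  simp_rw [h2]
  rw [integral_const_mul]
  congr 1
  have habs : ∀ x : ℝ, (fun y => f y * rexp (-y^2/2)) |x| = f x * rexp (-x^2/2) := by
    intro x
    rcases abs_choice x with h | h
    · rw [h]
    · rw [h]; simp only [hf, neg_sq]
  calc ∫ x, f x * rexp (-x^2/2)
      = ∫ x, (fun y => f y * rexp (-y^2/2)) |x| := by
        refine integral_congr_ae (Filter.Eventually.of_forall fun x => (habs x).symm)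
    _ = 2 * ∫ x in Ioi (0:ℝ), f x * rexp (-x^2/2) :=
        integral_comp_abs (f := fun y => f y * rexp (-y^2/2))

lemma ioi_moment (q : ℝ) (hq : (-1:ℝ) < q) :
    ∫ x in Ioi (0:ℝ), x ^ q * rexp (-x^2/2) = (1/2:ℝ) ^ (-(q+1)/2) * (1/2) * Gamma ((q+1)/2) := by
  have h := integral_rpow_mul_exp_neg_mul_rpow (p := 2) (q := q) (b := 1/2) two_pos hq (by norm_num)
  rw [← h]
  refine setIntegral_congr_fun measurableSet_Ioi (fun x hx => ?_)
  rw [rpow_two]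
  ring_nf

lemma sqrt_two_pi : √(2*π) = √2 * √π := Real.sqrt_mul (by norm_num) π

lemma half_rpow (r : ℝ) : (1/2:ℝ) ^ (-r) = (2:ℝ) ^ r := by
  rw [one_div, ← Real.rpow_neg_one (2:ℝ), ← Real.rpow_mul (by norm_num)]
  norm_num

lemma two_rpow_three_halves : (2:ℝ) ^ ((3:ℝ)/2) = 2 * √2 := by
  have : (3:ℝ)/2 = 1 + 1/2 := by norm_num
  rw [this, Real.rpow_add two_pos, Real.rpow_one, ← Real.sqrt_eq_rpow]

lemma two_rpow_five_halves : (2:ℝ) ^ ((5:ℝ)/2) = 4 * √2 := by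
  have : (5:ℝ)/2 = 2 + 1/2 := by norm_num
  rw [this, Real.rpow_add two_pos, ← Real.sqrt_eq_rpow]
  norm_num [Real.rpow_two]

lemma gamma_three_halves : Gamma ((3:ℝ)/2) = √π / 2 := by
  have : (3:ℝ)/2 = 1/2 + 1 := by norm_num
  rw [this, Real.Gamma_add_one (by norm_num), Real.Gamma_one_half_eq]
  ring

lemma gamma_five_halves : Gamma ((5:ℝ)/2) = 3 * √π / 4 := by
  have : (5:ℝ)/2 = 3/2 + 1 := by norm_num
  rw [this, Real.Gamma_add_one (by norm_num), gamma_three_halves]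
  ring

lemma ioi_moment_two : ∫ x in Ioi (0:ℝ), x ^ (2:ℕ) * rexp (-x^2/2) = √(2*π) / 2 := by
  have h := ioi_moment 2 (by norm_num)
  have e : ∀ x ∈ Ioi (0:ℝ), x ^ (2:ℕ) * rexp (-x^2/2) = x ^ (2:ℝ) * rexp (-x^2/2) := by
    intro x _; rw [Real.rpow_two]
  rw [setIntegral_congr_fun measurableSet_Ioi e, h]
  have h23 : -(2+1:ℝ)/2 = -((3:ℝ)/2) := by norm_num
  have h3 : (2+1:ℝ)/2 = (3:ℝ)/2 := by norm_num
  rw [h23, h3, half_rpow, two_rpow_three_halves, gamma_three_halves, sqrt_two_pi]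
  ring_nf

lemma ioi_moment_four : ∫ x in Ioi (0:ℝ), x ^ (4:ℕ) * rexp (-x^2/2) = 3 * √(2*π) / 2 := by
  have h := ioi_moment 4 (by norm_num)
  have e : ∀ x ∈ Ioi (0:ℝ), x ^ (4:ℕ) * rexp (-x^2/2) = x ^ (4:ℝ) * rexp (-x^2/2) := by
    intro x _; rw [← Real.rpow_natCast x 4]; norm_num
  rw [setIntegral_congr_fun measurableSet_Ioi e, h]
  have h23 : -(4+1:ℝ)/2 = -((5:ℝ)/2) := by norm_num
  have h3 : (4+1:ℝ)/2 = (5:ℝ)/2 := by norm_num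
  rw [h23, h3, half_rpow, two_rpow_five_halves, gamma_five_halves, sqrt_two_pi]
  ring_nf

lemma sqrt_two_pi_pos : 0 < √(2*π) := Real.sqrt_pos.mpr (by positivity)

lemma std_moment_two : ∫ x, x ^ (2:ℕ) ∂(gaussianReal 0 1) = 1 := by
  rw [integral_std_even (fun x => by rw [neg_pow]; norm_num), ioi_moment_two]
  field_simp

lemma std_moment_four : ∫ x, x ^ (4:ℕ) ∂(gaussianReal 0 1) = 3 := by
  rw [integral_std_even (fun x => by rw [neg_pow]; norm_num), ioi_moment_four]
  rw [inv_mul_eq_div, div_eq_iff sqrt_two_pi_pos.ne']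
  ring

lemma std_integrable_pow (n : ℕ) : Integrable (fun x => x ^ n) (gaussianReal 0 1) := by
  rw [gaussianReal_of_var_ne_zero 0 one_ne_zero]
  have h1 : gaussianPDF 0 1 = fun x => ((gaussianPDFReal 0 1 x).toNNReal : ℝ≥0∞) := rfl
  rw [h1, integrable_withDensity_iff_integrable_smul
    (measurable_gaussianPDFReal 0 1).real_toNNReal]
  have h2 : ∀ x : ℝ, (gaussianPDFReal 0 1 x).toNNReal • (x ^ n)
      = (√(2*π))⁻¹ * (x ^ (n:ℝ) * rexp (-(1/2) * x^2)) := by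
    intro x
    rw [NNReal.smul_def, smul_eq_mul, Real.coe_toNNReal _ (gaussianPDFReal_nonneg 0 1 x),
      Real.rpow_natCast]
    simp only [gaussianPDFReal]
    push_cast
    ring_nf
  simp_rw [h2]
  exact (integrable_rpow_mul_exp_neg_mul_sq (by norm_num : (0:ℝ) < 1/2)
    (lt_of_lt_of_le (by norm_num) (Nat.cast_nonneg n) : (-1:ℝ) < (n:ℝ))).const_mul _

lemma gaussianReal_eq_map (w : ℝ≥0) :
    gaussianReal 0 w = (gaussianReal 0 1).map (fun x => √w * x) := by
  have h := gaussianReal_map_const_mul (μ := 0) (v := 1) (√w)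
  rw [mul_zero] at h
  have hw : (⟨(√w)^2, sq_nonneg _⟩ : ℝ≥0) * 1 = w := by
    ext
    simp [Real.sq_sqrt w.coe_nonneg]
  rw [h]
  congr 1
  exact hw.symm

lemma gauss_integrable_pow (w : ℝ≥0) (n : ℕ) :
    Integrable (fun x => x ^ n) (gaussianReal 0 w) := by
  rw [gaussianReal_eq_map w,
    integrable_map_measure (measurable_id'.pow_const n).aestronglyMeasurable
      (measurable_const_mul _).aemeasurable]
  have : ((fun x : ℝ => x ^ n) ∘ fun x => √w * x) = fun x : ℝ => (√w) ^ n * x ^ n := by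
    funext x; simp [mul_pow]
  rw [this]
  exact (std_integrable_pow n).const_mul _

lemma gauss_moment_two (w : ℝ≥0) : ∫ x, x ^ (2:ℕ) ∂(gaussianReal 0 w) = w := by
  rw [gaussianReal_eq_map w,
    integral_map (measurable_const_mul _).aemeasurable
      (measurable_id'.pow_const 2).aestronglyMeasurable]
  simp_rw [mul_pow]
  rw [integral_const_mul, std_moment_two, Real.sq_sqrt w.coe_nonneg, mul_one]

lemma gauss_moment_four (w : ℝ≥0) : ∫ x, x ^ (4:ℕ) ∂(gaussianReal 0 w) = 3 * (w:ℝ)^2 := by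
  rw [gaussianReal_eq_map w,
    integral_map (measurable_const_mul _).aemeasurable
      (measurable_id'.pow_const 4).aestronglyMeasurable]
  simp_rw [mul_pow]
  rw [integral_const_mul, std_moment_four]
  have : (√w) ^ 4 = (w:ℝ)^2 := by
    rw [show (4:ℕ) = 2*2 from rfl, pow_mul, Real.sq_sqrt w.coe_nonneg]
  rw [this]
  ring

lemma gauss_lint_two (w : ℝ≥0) :
    ∫⁻ x, ENNReal.ofReal (x ^ 2) ∂(gaussianReal 0 w) = ENNReal.ofReal (w:ℝ) := by
  rw [← ofReal_integral_eq_lintegral_ofReal (gauss_integrable_pow w 2)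
    (Filter.Eventually.of_forall fun x => sq_nonneg x), gauss_moment_two]

lemma gauss_lint_four (w : ℝ≥0) :
    ∫⁻ x, ENNReal.ofReal (x ^ 4) ∂(gaussianReal 0 w) = ENNReal.ofReal (3 * (w:ℝ)^2) := by
  rw [← ofReal_integral_eq_lintegral_ofReal (gauss_integrable_pow w 4)
    (Filter.Eventually.of_forall fun x => by positivity), gauss_moment_four]

lemma measurable_gsm_kernel {v : ℝ} (hv : 0 < v) :
    Measurable (fun z : ℝ => gaussianReal 0 (z * v).toNNReal) := by
  refine Measure.measurable_of_measurable_coe _ (fun s hs => ?_)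
  have hFmeas : Measurable (fun p : ℝ × ℝ =>
      s.indicator (gaussianPDF 0 (p.1 * v).toNNReal) p.2) := by
    have h1 : Measurable (fun p : ℝ × ℝ => gaussianPDF 0 (p.1 * v).toNNReal p.2) := by
      simp only [gaussianPDF, gaussianPDFReal, sub_zero]
      refine Measurable.ennreal_ofReal (Measurable.mul ?_ ?_)
      · refine Measurable.inv (Measurable.sqrt ?_)
        exact (measurable_const.mul ((measurable_fst.mul_const v).real_toNNReal.coe_nnreal_real))
      · refine Real.measurable_exp.comp (Measurable.mul ?_ ?_)
        · exact (measurable_snd.pow_const 2).neg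
        · exact ((measurable_const.mul
            (measurable_fst.mul_const v).real_toNNReal.coe_nnreal_real)).inv
    classical
    have : (fun p : ℝ × ℝ => s.indicator (gaussianPDF 0 (p.1 * v).toNNReal) p.2)
        = fun p : ℝ × ℝ => if p.2 ∈ s then gaussianPDF 0 (p.1 * v).toNNReal p.2 else 0 := by
      funext p; simp [Set.indicator_apply]
    rw [this]
    exact Measurable.ite (measurable_snd hs) h1 measurable_const
  have hg : Measurable (fun z : ℝ => ∫⁻ x in s, gaussianPDF 0 (z * v).toNNReal x) := by
    simp_rw [← lintegral_indicator hs]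
    exact Measurable.lintegral_prod_right hFmeas
  have heq : (fun z : ℝ => gaussianReal 0 (z * v).toNNReal s)
      = (Iic (0:ℝ)).piecewise (fun _ => Measure.dirac (0:ℝ) s)
        (fun z => ∫⁻ x in s, gaussianPDF 0 (z * v).toNNReal x) := by
    funext z
    by_cases hz : z ≤ 0
    · rw [Set.piecewise_eq_of_mem _ _ _ (by exact hz)]
      rw [Real.toNNReal_of_nonpos (mul_nonpos_iff.mpr (Or.inr ⟨hz, hv.le⟩)), gaussianReal_zero_var]
    · rw [Set.piecewise_eq_of_notMem _ _ _ (by exact hz)]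
      have hzpos : 0 < z := lt_of_not_ge hz
      have hw : (z * v).toNNReal ≠ 0 := by
        simp [Real.toNNReal_eq_zero, not_le, mul_pos hzpos hv]
      rw [gaussianReal_apply 0 hw s]
  rw [heq]
  exact Measurable.piecewise measurableSet_Iic measurable_const hg

lemma measure_map_bind {α β γ : Type*} [MeasurableSpace α] [MeasurableSpace β] [MeasurableSpace γ]
    (m : Measure α) {f : α → Measure β} {g : β → γ}
    (hf : Measurable f) (hg : Measurable g) :
    (m.bind f).map g = m.bind (fun a => (f a).map g) := by
  ext s hs
  have hmeas : Measurable (fun a => (f a).map g) := (Measure.measurable_map g hg).comp hf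
  rw [Measure.map_apply hg hs, Measure.bind_apply (hg hs) hf.aemeasurable, Measure.bind_apply hs hmeas.aemeasurable]
  refine lintegral_congr (fun a => ?_)
  rw [Measure.map_apply hg hs]

end GSMAux

end AuxGaussian

/-- The one-dimensional Gaussian scale mixture with mixing distribution `μ` and base
variance `v`: the measure obtained by binding `μ` with `z ↦ N(0, z·v)`. -/
noncomputable def GSM (μ : Measure ℝ) (v : ℝ) : Measure ℝ :=
  μ.bind (fun z => (gaussianReal 0 (z * v).toNNReal : Measure ℝ))

/-- Excess kurtosis of a probability measure on `ℝ`: the fourth central moment divided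
by the squared variance, minus 3. -/
noncomputable def kurt (ν : Measure ℝ) : ℝ :=
  centralMoment id 4 ν / (variance id ν) ^ 2 - 3

/-- Gaussian scale mixtures are never platykurtic: the excess kurtosis of `GSM(μ, v)` is
nonnegative, and it is zero if and only if the mixing distribution `μ` is a Dirac point
mass (equivalently, the variance of `μ` is zero). -/
theorem gsm_kurtosis_nonneg_and_zero_iff_dirac
    (μ : Measure ℝ) [IsProbabilityMeasure μ]
    (hpos : ∀ᵐ z ∂μ, 0 < z)
    (hmom : Integrable (fun z => z ^ 2) μ)
    (hmean : 0 < ∫ z, z ∂μ)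
    (v : ℝ) (hv : 0 < v) :
    0 ≤ kurt (GSM μ v) ∧
    (kurt (GSM μ v) = 0 ↔ ∃ c : ℝ, μ = Measure.dirac c) ∧
    (kurt (GSM μ v) = 0 ↔ variance id μ = 0) := by
  classical
  set m1 : ℝ := ∫ z, z ∂μ with hm1
  set m2 : ℝ := ∫ z, z ^ 2 ∂μ with hm2
  have hK : Measurable (fun z : ℝ => gaussianReal 0 (z * v).toNNReal) :=
    GSMAux.measurable_gsm_kernel hv
  have hprob : IsProbabilityMeasure (GSM μ v) := by
    constructor
    rw [GSM, Measure.bind_apply MeasurableSet.univ hK.aemeasurable]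
    simp [measure_univ]
  -- integrability of z over μ
  have hμint1 : Integrable (fun z : ℝ => z) μ := by
    refine ((integrable_const (1:ℝ)).add hmom).mono' measurable_id.aestronglyMeasurable ?_
    refine Filter.Eventually.of_forall (fun z => ?_)
    simp only [Real.norm_eq_abs, Pi.add_apply]
    nlinarith [sq_nonneg (|z| - 1), sq_abs z]
  -- second moment of GSM
  have hlint2 : ∫⁻ x, ENNReal.ofReal (x ^ 2) ∂(GSM μ v) = ENNReal.ofReal (v * m1) := by
    rw [GSM, MeasureTheory.Measure.lintegral_bind hK.aemeasurable
      (measurable_id'.pow_const 2).ennreal_ofReal.aemeasurable]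
    have h1 : ∀ᵐ z ∂μ, (∫⁻ x, ENNReal.ofReal (x ^ 2) ∂(gaussianReal 0 (z * v).toNNReal))
        = ENNReal.ofReal (z * v) := by
      filter_upwards [hpos] with z hz
      rw [GSMAux.gauss_lint_two, Real.coe_toNNReal _ (mul_nonneg hz.le hv.le)]
    rw [lintegral_congr_ae h1,
      ← ofReal_integral_eq_lintegral_ofReal (hμint1.mul_const v)
        (hpos.mono fun z hz => mul_nonneg hz.le hv.le)]
    rw [integral_mul_const]
    ring_nf
    congr 1
    rw [hm1]
    ring
  have hint2 : Integrable (fun x : ℝ => x ^ 2) (GSM μ v) := by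
    refine ⟨(measurable_id'.pow_const 2).aestronglyMeasurable, ?_⟩
    rw [hasFiniteIntegral_iff_ofReal (Filter.Eventually.of_forall fun x => sq_nonneg x), hlint2]
    exact ENNReal.ofReal_lt_top
  have hvm1 : 0 ≤ v * m1 := mul_nonneg hv.le hmean.le
  have hm2ν : ∫ x, x ^ 2 ∂(GSM μ v) = v * m1 := by
    rw [integral_eq_lintegral_of_nonneg_ae (Filter.Eventually.of_forall fun x => sq_nonneg x)
      (measurable_id'.pow_const 2).aestronglyMeasurable, hlint2, ENNReal.toReal_ofReal hvm1]
  -- fourth moment of GSM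
  have hlint4 : ∫⁻ x, ENNReal.ofReal (x ^ 4) ∂(GSM μ v) = ENNReal.ofReal (3 * v ^ 2 * m2) := by
    rw [GSM, MeasureTheory.Measure.lintegral_bind hK.aemeasurable
      (measurable_id'.pow_const 4).ennreal_ofReal.aemeasurable]
    have h1 : ∀ᵐ z ∂μ, (∫⁻ x, ENNReal.ofReal (x ^ 4) ∂(gaussianReal 0 (z * v).toNNReal))
        = ENNReal.ofReal (3 * v ^ 2 * z ^ 2) := by
      filter_upwards [hpos] with z hz
      rw [GSMAux.gauss_lint_four, Real.coe_toNNReal _ (mul_nonneg hz.le hv.le)]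
      congr 1
      ring
    rw [lintegral_congr_ae h1,
      ← ofReal_integral_eq_lintegral_ofReal (hmom.const_mul (3 * v ^ 2))
        (Filter.Eventually.of_forall fun z => by positivity)]
    rw [integral_const_mul]
  have hint4 : Integrable (fun x : ℝ => x ^ 4) (GSM μ v) := by
    refine ⟨(measurable_id'.pow_const 4).aestronglyMeasurable, ?_⟩
    rw [hasFiniteIntegral_iff_ofReal (Filter.Eventually.of_forall fun x => by positivity), hlint4]
    exact ENNReal.ofReal_lt_top
  have hm2nonneg : 0 ≤ m2 := integral_nonneg fun z => sq_nonneg z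
  have hm4ν : ∫ x, x ^ 4 ∂(GSM μ v) = 3 * v ^ 2 * m2 := by
    rw [integral_eq_lintegral_of_nonneg_ae (Filter.Eventually.of_forall fun x => by positivity)
      (measurable_id'.pow_const 4).aestronglyMeasurable, hlint4,
      ENNReal.toReal_ofReal (by positivity)]
  -- mean of GSM is zero
  have hgneg : ∀ w : NNReal, (gaussianReal 0 w).map (Neg.neg : ℝ → ℝ) = gaussianReal 0 w := by
    intro w
    have h2 := gaussianReal_map_const_mul (μ := 0) (v := w) (-1 : ℝ)
    have h1 : (((-1:ℝ)) * ·) = (Neg.neg : ℝ → ℝ) := by funext x; simp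
    rw [h1] at h2
    rw [h2]
    congr 1
    · ring
    · ext
      push_cast
      norm_num
  have hneg : (GSM μ v).map (Neg.neg : ℝ → ℝ) = GSM μ v := by
    rw [GSM, GSMAux.measure_map_bind μ hK measurable_neg]
    congr 1
    funext z
    exact hgneg _
  have hintid : Integrable (fun x : ℝ => x) (GSM μ v) := by
    refine ((integrable_const (1:ℝ)).add hint2).mono' measurable_id.aestronglyMeasurable ?_
    refine Filter.Eventually.of_forall (fun x => ?_)
    simp only [Real.norm_eq_abs, Pi.add_apply]
    nlinarith [sq_nonneg (|x| - 1), sq_abs x]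
  have hmean0 : ∫ x, x ∂(GSM μ v) = 0 := by
    have h2 : ∫ y, id y ∂((GSM μ v).map (Neg.neg : ℝ → ℝ)) = ∫ x, id (Neg.neg x) ∂(GSM μ v) :=
      integral_map measurable_neg.aemeasurable measurable_id.aestronglyMeasurable
    rw [hneg] at h2
    simp only [id_eq] at h2
    rw [integral_neg] at h2
    linarith
  -- variance and central moment of GSM
  have hMemℒp : MemLp (id : ℝ → ℝ) 2 (GSM μ v) := by
    refine (memLp_two_iff_integrable_sq measurable_id.aestronglyMeasurable).mpr ?_
    simpa using hint2
  have hvarν : variance id (GSM μ v) = v * m1 := by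
    rw [variance_eq_sub hMemℒp]
    simp only [Pi.pow_apply, id_eq]
    rw [hm2ν, hmean0]
    ring
  have hcm : centralMoment id 4 (GSM μ v) = 3 * v ^ 2 * m2 := by
    simp only [centralMoment, Pi.sub_apply, Pi.pow_apply, id_eq, hmean0, sub_zero]
    exact hm4ν
  -- variance of μ
  have hμMemℒp : MemLp (id : ℝ → ℝ) 2 μ := by
    refine (memLp_two_iff_integrable_sq measurable_id.aestronglyMeasurable).mpr ?_
    simpa using hmom
  have hvarμ : variance id μ = m2 - m1 ^ 2 := by
    rw [variance_eq_sub hμMemℒp]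
    simp only [Pi.pow_apply, id_eq]
    rfl
  -- kurtosis formula
  have hm1ne : m1 ≠ 0 := hmean.ne'
  have hkurt : kurt (GSM μ v) = 3 * variance id μ / m1 ^ 2 := by
    rw [kurt, hcm, hvarν, hvarμ]
    field_simp
  have hiff : kurt (GSM μ v) = 0 ↔ variance id μ = 0 := by
    rw [hkurt]
    constructor
    · intro h
      rcases div_eq_zero_iff.mp h with h1 | h1
      · linarith [mul_left_cancel₀ (three_ne_zero (α := ℝ)) (by linarith : (3:ℝ) * variance id μ = 3 * 0)]
      · exact absurd h1 (pow_ne_zero 2 hm1ne)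
    · intro h
      rw [h]
      simp
  have hdir : variance id μ = 0 ↔ ∃ c : ℝ, μ = Measure.dirac c := by
    constructor
    · intro h
      refine ⟨m1, ?_⟩
      have hm2eq : m2 = m1 ^ 2 := by
        have := hvarμ.symm.trans h
        linarith
      have hintc : Integrable (fun z : ℝ => (z - m1) ^ 2) μ := by
        have he : (fun z : ℝ => (z - m1) ^ 2)
            = fun z : ℝ => (z ^ 2 - 2 * m1 * z) + m1 ^ 2 := by
          funext z; ring
        rw [he]
        exact (hmom.sub (hμint1.const_mul (2 * m1))).add (integrable_const _)
      have hzero : ∫ z, (z - m1) ^ 2 ∂μ = 0 := by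
        have he : (fun z : ℝ => (z - m1) ^ 2)
            = fun z : ℝ => (z ^ 2 - 2 * m1 * z) + m1 ^ 2 := by
          funext z; ring
        have hI1 : Integrable (fun z : ℝ => z ^ 2 - 2 * m1 * z) μ :=
          hmom.sub (hμint1.const_mul (2 * m1))
        have hI2 : Integrable (fun z : ℝ => 2 * m1 * z) μ := hμint1.const_mul (2 * m1)
        rw [he, integral_add hI1 (integrable_const _),
          integral_sub hmom hI2, integral_const_mul, integral_const]
        simp only [measure_univ, probReal_univ, ENNReal.toReal_one, smul_eq_mul, one_mul]
        rw [← hm1, ← hm2, hm2eq]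
        ring
      have hae : ∀ᵐ z ∂μ, z = m1 := by
        have h0 := (integral_eq_zero_iff_of_nonneg (fun z => sq_nonneg _) hintc).mp hzero
        filter_upwards [h0] with z hz
        have : (z - m1) ^ 2 = 0 := hz
        have := pow_eq_zero_iff (n := 2) (by norm_num) |>.mp this
        linarith [sub_eq_zero.mp this]
      ext s hs
      rw [Measure.dirac_apply' m1 hs]
      have haenull : μ {z : ℝ | ¬ z = m1} = 0 := ae_iff.mp hae
      by_cases hm : m1 ∈ s
      · have hcompl : μ sᶜ = 0 := by
          refine measure_mono_null ?_ haenull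
          intro z hz
          simp only [Set.mem_setOf_eq]
          intro h'
          exact hz (h' ▸ hm)
        have hsum := measure_add_measure_compl (μ := μ) hs
        rw [hcompl, add_zero, measure_univ] at hsum
        rw [hsum, Set.indicator_of_mem hm]
        rfl
      · have hnull : μ s = 0 := by
          refine measure_mono_null ?_ haenull
          intro z hz
          simp only [Set.mem_setOf_eq]
          intro h'
          exact hm (h' ▸ hz)
        rw [hnull, Set.indicator_of_notMem hm]
    · rintro ⟨c, rfl⟩
      have hc : MemLp (id : ℝ → ℝ) 2 (Measure.dirac c) := by
        refine (memLp_two_iff_integrable_sq measurable_id.aestronglyMeasurable).mpr ?_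
        refine ⟨(measurable_id'.pow_const 2).aestronglyMeasurable, ?_⟩
        simp only [HasFiniteIntegral, lintegral_dirac]
        exact ENNReal.coe_lt_top
      rw [variance_eq_sub hc]
      have h1 : ∫ x, ((id : ℝ → ℝ) ^ 2) x ∂(Measure.dirac c) = c ^ 2 := by
        rw [integral_dirac]
        simp
      have h2 : ∫ x, (id : ℝ → ℝ) x ∂(Measure.dirac c) = c := by
        rw [integral_dirac]
        simp
      rw [h1, h2]
      ring
  refine ⟨?_, hiff.trans hdir, hiff⟩
  rw [hkurt]
  have := variance_nonneg id μ
  positivity
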